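/- Let C be a small category and e an object of C such that C satisfies the left-Ore condition at e and is weakly left-cancellative at e. Then there is a group structure on the quotient X/~ such that (t/s)·(t'/s') = (t ≫ f)/(s' ≫ f') for all pairs (t,s), (t',s') ∈ X and all morphisms f, f' with s ≫ f = t' ≫ f', the class t/t is the identity element for every morphism t with source e, and (t/s)⁻¹ = s/t. -/
import Mathlib


open CategoryTheory

universe v u

/-- Pairs of morphisms with source `e` and a common target. -/
def Frac {C : Type u} [Category.{v} C] (e : C) : Type max u v :=
  Σ b : C, (e ⟶ b) × (e ⟶ b)

/-- The basic relation `(t, s) ∼ (t ≫ f, s ≫ f)` generating the equivalence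
relation on fractions. -/
inductive FracRel {C : Type u} [Category.{v} C] (e : C) : Frac e → Frac e → Prop
  | mk {b d : C} (t s : e ⟶ b) (f : b ⟶ d) :
      FracRel e ⟨b, (t, s)⟩ ⟨d, (t ≫ f, s ≫ f)⟩

section Aux

variable {C : Type u} [Category.{v} C] {e : C}

theorem frac_ext {b d : C} (t s : e ⟶ b) (f : b ⟶ d) :
    Quot.mk (FracRel e) ⟨b, (t, s)⟩ = Quot.mk (FracRel e) ⟨d, (t ≫ f, s ≫ f)⟩ :=
  Quot.sound (FracRel.mk t s f)

variable
  (hOre : ∀ {b c : C} (p : e ⟶ b) (q : e ⟶ c),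
      ∃ (d : C) (h : b ⟶ d) (k : c ⟶ d), p ≫ h = q ≫ k)
  (hCancel : ∀ {b c : C} (f : e ⟶ b) (p q : b ⟶ c), f ≫ p = f ≫ q →
      ∃ (d : C) (g : c ⟶ d), p ≫ g = q ≫ g)

include hOre hCancel in
theorem frac_key {b b' d₁ d₂ : C} (t s : e ⟶ b) (t' s' : e ⟶ b')
    (f : b ⟶ d₁) (f' : b' ⟶ d₁) (g : b ⟶ d₂) (g' : b' ⟶ d₂)
    (hf : s ≫ f = t' ≫ f') (hg : s ≫ g = t' ≫ g') :
    Quot.mk (FracRel e) ⟨d₁, (t ≫ f, s' ≫ f')⟩ =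
      Quot.mk (FracRel e) ⟨d₂, (t ≫ g, s' ≫ g')⟩ := by
  obtain ⟨d, h, k, hhk⟩ := hOre (s ≫ f) (s ≫ g)
  obtain ⟨d2, u, hu⟩ := hCancel s (f ≫ h) (g ≫ k) (by simpa using hhk)
  obtain ⟨d3, v, hv⟩ := hCancel t' (f' ≫ h ≫ u) (g' ≫ k ≫ u) (by
    have h1 : s ≫ f ≫ h ≫ u = s ≫ g ≫ k ≫ u := by
      have := congrArg (s ≫ ·) hu; simpa using this
    calc t' ≫ f' ≫ h ≫ u = (t' ≫ f') ≫ h ≫ u := by simp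
      _ = (s ≫ f) ≫ h ≫ u := by rw [hf]
      _ = (s ≫ g) ≫ k ≫ u := by simpa using h1
      _ = t' ≫ g' ≫ k ≫ u := by rw [hg]; simp)
  have hu' : f ≫ h ≫ u ≫ v = g ≫ k ≫ u ≫ v := by
    have := congrArg (· ≫ v) hu; simpa using this
  have hv' : f' ≫ h ≫ u ≫ v = g' ≫ k ≫ u ≫ v := by simpa using hv
  calc Quot.mk (FracRel e) ⟨d₁, (t ≫ f, s' ≫ f')⟩
      = Quot.mk (FracRel e) ⟨d3, ((t ≫ f) ≫ h ≫ u ≫ v, (s' ≫ f') ≫ h ≫ u ≫ v)⟩ :=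
        frac_ext _ _ _
    _ = Quot.mk (FracRel e) ⟨d3, ((t ≫ g) ≫ k ≫ u ≫ v, (s' ≫ g') ≫ k ≫ u ≫ v)⟩ := by
        have e1 : (t ≫ f) ≫ h ≫ u ≫ v = (t ≫ g) ≫ k ≫ u ≫ v := by
          simp only [Category.assoc]; rw [hu']
        have e2 : (s' ≫ f') ≫ h ≫ u ≫ v = (s' ≫ g') ≫ k ≫ u ≫ v := by
          simp only [Category.assoc]; rw [hv']
        rw [e1, e2]
    _ = Quot.mk (FracRel e) ⟨d₂, (t ≫ g, s' ≫ g')⟩ := (frac_ext _ _ _).symm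

noncomputable def fracPMul : Frac e → Frac e → Quot (FracRel e) := fun x y =>
  Quot.mk _ ⟨(hOre x.2.2 y.2.1).choose,
    (x.2.1 ≫ (hOre x.2.2 y.2.1).choose_spec.choose,
     y.2.2 ≫ (hOre x.2.2 y.2.1).choose_spec.choose_spec.choose)⟩

include hCancel in
theorem fracPMul_eq {b b' d : C} (t s : e ⟶ b) (t' s' : e ⟶ b')
    (f : b ⟶ d) (f' : b' ⟶ d) (hf : s ≫ f = t' ≫ f') :
    fracPMul hOre ⟨b, (t, s)⟩ ⟨b', (t', s')⟩ = Quot.mk (FracRel e) ⟨d, (t ≫ f, s' ≫ f')⟩ :=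
  frac_key hOre hCancel t s t' s' _ _ f f'
    (hOre s t').choose_spec.choose_spec.choose_spec hf

noncomputable def fracMul : Quot (FracRel e) → Quot (FracRel e) → Quot (FracRel e) :=
  Quot.lift₂ (fracPMul hOre)
    (by
      rintro ⟨b, t, s⟩ y₁ y₂ ⟨t', s', w⟩
      obtain ⟨d, g, g', hg⟩ := hOre s (t' ≫ w)
      rw [fracPMul_eq hOre hCancel t s _ _ g g' hg,
        fracPMul_eq hOre hCancel t s t' s' g (w ≫ g') (by rw [hg]; simp)]
      simp)
    (by
      rintro x₁ x₂ ⟨b', t', s'⟩ ⟨t, s, w⟩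
      obtain ⟨d, g, g', hg⟩ := hOre (s ≫ w) t'
      rw [fracPMul_eq hOre hCancel _ _ t' s' g g' hg,
        fracPMul_eq hOre hCancel t s t' s' (w ≫ g) g' (by rw [← hg]; simp)]
      simp)

theorem fracMul_eq {b b' d : C} (t s : e ⟶ b) (t' s' : e ⟶ b')
    (f : b ⟶ d) (f' : b' ⟶ d) (hf : s ≫ f = t' ≫ f') :
    fracMul hOre hCancel (Quot.mk (FracRel e) ⟨b, (t, s)⟩) (Quot.mk (FracRel e) ⟨b', (t', s')⟩)
      = Quot.mk (FracRel e) ⟨d, (t ≫ f, s' ≫ f')⟩ :=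
  fracPMul_eq hOre hCancel t s t' s' f f' hf

end Aux

/-- Let `C` be a small category and `e` an object of `C` such that `C`
satisfies the left-Ore condition at `e` and is weakly left-cancellative at `e`.
Then there is a group structure on the quotient `X/∼` such that
`(t/s)·(t'/s') = (t ≫ f)/(s' ≫ f')` whenever `s ≫ f = t' ≫ f'`, the class `t/t` is the
identity element for every `t` with source `e`, and `(t/s)⁻¹ = s/t`. -/
theorem stmt0 {C : Type u} [Category.{v} C] (e : C)
    (hOre : ∀ {b c : C} (p : e ⟶ b) (q : e ⟶ c),
      ∃ (d : C) (h : b ⟶ d) (k : c ⟶ d), p ≫ h = q ≫ k)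
    (hCancel : ∀ {b c : C} (f : e ⟶ b) (p q : b ⟶ c), f ≫ p = f ≫ q →
      ∃ (d : C) (g : c ⟶ d), p ≫ g = q ≫ g) :
    ∃ (mul : Quot (FracRel e) → Quot (FracRel e) → Quot (FracRel e))
      (one : Quot (FracRel e)) (inv : Quot (FracRel e) → Quot (FracRel e)),
      -- group axioms
      (∀ x y z, mul (mul x y) z = mul x (mul y z)) ∧
      (∀ x, mul one x = x) ∧
      (∀ x, mul x one = x) ∧
      (∀ x, mul (inv x) x = one) ∧
      (∀ x, mul x (inv x) = one) ∧
      -- the multiplication of fractions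
      (∀ {b b' d : C} (t s : e ⟶ b) (t' s' : e ⟶ b') (f : b ⟶ d) (f' : b' ⟶ d),
        s ≫ f = t' ≫ f' →
        mul (Quot.mk (FracRel e) ⟨b, (t, s)⟩) (Quot.mk (FracRel e) ⟨b', (t', s')⟩)
          = Quot.mk (FracRel e) ⟨d, (t ≫ f, s' ≫ f')⟩) ∧
      -- the identity element
      (∀ {b : C} (t : e ⟶ b), Quot.mk (FracRel e) ⟨b, (t, t)⟩ = one) ∧
      -- inverses
      (∀ {b : C} (t s : e ⟶ b),
        inv (Quot.mk (FracRel e) ⟨b, (t, s)⟩) = Quot.mk (FracRel e) ⟨b, (s, t)⟩) := by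
  classical
  refine ⟨fracMul hOre hCancel, Quot.mk _ ⟨e, (𝟙 e, 𝟙 e)⟩,
    Quot.lift (fun x => Quot.mk _ ⟨x.1, (x.2.2, x.2.1)⟩)
      (by rintro _ _ ⟨t, s, f⟩; exact Quot.sound (FracRel.mk s t f)),
    ?_, ?_, ?_, ?_, ?_, ?_, ?_, ?_⟩
  · rintro ⟨⟨b, t, s⟩⟩ ⟨⟨b', t', s'⟩⟩ ⟨⟨b'', t'', s''⟩⟩
    obtain ⟨d, f, f', hf⟩ := hOre s t'
    obtain ⟨d2, g, g', hg⟩ := hOre (s' ≫ f') t''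
    rw [fracMul_eq hOre hCancel t s t' s' f f' hf,
        fracMul_eq hOre hCancel _ _ t'' s'' g g' hg,
        fracMul_eq hOre hCancel t' s' t'' s'' (f' ≫ g) g' (by simpa using hg),
        fracMul_eq hOre hCancel t s _ _ (f ≫ g) (𝟙 _) (by simp [reassoc_of% hf])]
    simp
  · rintro ⟨⟨b, t, s⟩⟩
    rw [fracMul_eq hOre hCancel (𝟙 e) (𝟙 e) t s t (𝟙 b) (by simp)]
    simp
  · rintro ⟨⟨b, t, s⟩⟩
    rw [fracMul_eq hOre hCancel t s (𝟙 e) (𝟙 e) (𝟙 b) s (by simp)]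
    simp
  · rintro ⟨⟨b, t, s⟩⟩
    rw [show fracMul hOre hCancel
          (Quot.lift (fun x : Frac e => Quot.mk (FracRel e) ⟨x.1, (x.2.2, x.2.1)⟩)
            (by rintro _ _ ⟨t, s, f⟩; exact Quot.sound (FracRel.mk s t f))
            (Quot.mk (FracRel e) ⟨b, (t, s)⟩))
          (Quot.mk (FracRel e) ⟨b, (t, s)⟩)
        = fracMul hOre hCancel (Quot.mk (FracRel e) ⟨b, (s, t)⟩)
            (Quot.mk (FracRel e) ⟨b, (t, s)⟩) from rfl,
      fracMul_eq hOre hCancel s t t s (𝟙 b) (𝟙 b) rfl]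
    simpa using (frac_ext (𝟙 e) (𝟙 e) s).symm
  · rintro ⟨⟨b, t, s⟩⟩
    rw [show (Quot.lift (fun x : Frac e => Quot.mk (FracRel e) ⟨x.1, (x.2.2, x.2.1)⟩)
            (by rintro _ _ ⟨t, s, f⟩; exact Quot.sound (FracRel.mk s t f))
            (Quot.mk (FracRel e) ⟨b, (t, s)⟩))
        = Quot.mk (FracRel e) ⟨b, (s, t)⟩ from rfl,
      fracMul_eq hOre hCancel t s s t (𝟙 b) (𝟙 b) rfl]
    simpa using (frac_ext (𝟙 e) (𝟙 e) t).symm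
  · exact fun {b b' d} t s t' s' f f' hf => fracMul_eq hOre hCancel t s t' s' f f' hf
  · exact fun {b} t => by simpa using (frac_ext (𝟙 e) (𝟙 e) t).symm
  · exact fun {b} t s => rfl
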